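/- Assume Ozawa's inequality: there exist 0 < ω ≤ π and for each α ∈ (0,ω) a constant H_α > 0 with ∫_ℝ(e^{αu²}−1)dx ≤ H_α‖u‖²_{L²} whenever ‖(−Δ)^{1/4}u‖²_{L²} ≤ 1. Then for every u ∈ H^{1/2}(ℝ) and every α > 0 (not only small α), the integral ∫_ℝ (e^{α u²} − 1) dx is finite. -/

import Mathlib

open MeasureTheory

noncomputable def gagliardoSq (u : ℝ → ℝ) : ℝ :=
  (1 / (2 * Real.pi)) * ∫ p : ℝ × ℝ, (u p.1 - u p.2) ^ 2 / |p.1 - p.2| ^ 2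

noncomputable def l2Sq (u : ℝ → ℝ) : ℝ := ∫ x : ℝ, (u x) ^ 2

def memH12 (u : ℝ → ℝ) : Prop :=
  MemLp u 2 volume ∧
    Integrable (fun p : ℝ × ℝ => (u p.1 - u p.2) ^ 2 / |p.1 - p.2| ^ 2)


noncomputable def trunc (M t : ℝ) : ℝ := max (min t M) (-M)

lemma trunc_mono (M : ℝ) : Monotone (trunc M) :=
  fun _ _ h => max_le_max (min_le_min h le_rfl) le_rfl

lemma trunc_lip (M a b : ℝ) : |trunc M a - trunc M b| ≤ |a - b| := by
  refine (abs_max_sub_max_le_abs _ _ _).trans ?_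
  have := abs_min_sub_min_le_max a M b M
  simpa using this

lemma trunc_nonneg_case (M t : ℝ) (hM : 0 ≤ M) (ht : 0 ≤ t) : trunc M t = min t M := by
  unfold trunc
  exact max_eq_left (le_trans (by linarith) (le_min ht hM))

lemma trunc_nonpos_case (M t : ℝ) (hM : 0 ≤ M) (ht : t ≤ 0) : trunc M t = max t (-M) := by
  unfold trunc
  rw [min_eq_left (by linarith)]

lemma trunc_abs_eq (M t : ℝ) (hM : 0 ≤ M) : |trunc M t| = min |t| M := by
  rcases le_total 0 t with ht|ht
  · rw [trunc_nonneg_case M t hM ht, abs_of_nonneg (le_min ht hM), abs_of_nonneg ht]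
  · rw [trunc_nonpos_case M t hM ht, abs_of_nonpos (max_le ht (by linarith)),
      abs_of_nonpos ht, ← min_neg_neg, neg_neg]

lemma trunc_abs_le (M t : ℝ) (hM : 0 ≤ M) : |trunc M t| ≤ |t| := by
  rw [trunc_abs_eq M t hM]; exact min_le_left _ _

lemma trunc_abs_le' (M t : ℝ) (hM : 0 ≤ M) : |trunc M t| ≤ M := by
  rw [trunc_abs_eq M t hM]; exact min_le_right _ _

lemma trunc_eq_self (M t : ℝ) (h : |t| ≤ M) : trunc M t = t := by
  rw [abs_le] at h
  unfold trunc
  rw [min_eq_left h.2, max_eq_left h.1]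

lemma trunc_sq_mono (t : ℝ) {M N : ℝ} (hM : 0 ≤ M) (hMN : M ≤ N) :
    (trunc M t) ^ 2 ≤ (trunc N t) ^ 2 := by
  rw [← sq_abs (trunc M t), ← sq_abs (trunc N t), trunc_abs_eq M t hM,
    trunc_abs_eq N t (hM.trans hMN)]
  exact pow_le_pow_left₀ (le_min (abs_nonneg t) hM)
    (le_min (min_le_left _ _) ((min_le_right _ _).trans hMN)) 2

lemma resid_lip (M a b : ℝ) : |(a - trunc M a) - (b - trunc M b)| ≤ |a - b| := by
  rcases le_total b a with h|h
  · have h1 : trunc M b ≤ trunc M a := trunc_mono M h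
    have h2 : trunc M a - trunc M b ≤ a - b := by
      have := trunc_lip M a b
      rw [abs_of_nonneg (by linarith), abs_of_nonneg (by linarith)] at this
      exact this
    rw [abs_of_nonneg (by linarith), abs_of_nonneg (by linarith)]
    linarith
  · have h1 : trunc M a ≤ trunc M b := trunc_mono M h
    have h2 : trunc M b - trunc M a ≤ b - a := by
      have := trunc_lip M b a
      rw [abs_of_nonneg (by linarith), abs_of_nonneg (by linarith)] at this
      exact this
    rw [abs_of_nonpos (by linarith), abs_of_nonpos (by linarith)]
    linarith

lemma trunc_zero (M : ℝ) (hM : 0 ≤ M) : trunc M 0 = 0 := trunc_eq_self M 0 (by simpa using hM)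

lemma resid_abs_le (M t : ℝ) (hM : 0 ≤ M) : |t - trunc M t| ≤ |t| := by
  have := resid_lip M t 0
  rw [trunc_zero M hM] at this
  simpa using this

lemma exp_sub_one_le (y : ℝ) : Real.exp y - 1 ≤ y * Real.exp y := by
  have h1 : Real.exp y * Real.exp (-y) = 1 := by rw [← Real.exp_add]; simp
  nlinarith [Real.add_one_le_exp (-y), Real.exp_pos y]

lemma div_le_div_nonneg' {A B C : ℝ} (hAB : A ≤ B) (hC : 0 ≤ C) :
    A / C ≤ B / C := by
  rcases eq_or_lt_of_le hC with h|h
  · simp [← h]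
  · exact (div_le_div_iff_of_pos_right h).2 hAB

lemma K_meas {u : ℝ → ℝ} (hu : Measurable u) :
    Measurable (fun p : ℝ × ℝ => (u p.1 - u p.2) ^ 2 / |p.1 - p.2| ^ 2) := by
  apply Measurable.div
  · exact ((hu.comp measurable_fst).sub (hu.comp measurable_snd)).pow_const 2
  · exact ((measurable_fst.sub measurable_snd).abs).pow_const 2

lemma K_nonneg (u : ℝ → ℝ) (p : ℝ × ℝ) :
    0 ≤ (u p.1 - u p.2) ^ 2 / |p.1 - p.2| ^ 2 :=
  div_nonneg (sq_nonneg _) (by positivity)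

lemma K_mono {u v : ℝ → ℝ} (h : ∀ a b, |v a - v b| ≤ |u a - u b|) (p : ℝ × ℝ) :
    (v p.1 - v p.2) ^ 2 / |p.1 - p.2| ^ 2 ≤ (u p.1 - u p.2) ^ 2 / |p.1 - p.2| ^ 2 := by
  apply div_le_div_nonneg' _ (by positivity)
  rw [← sq_abs (v p.1 - v p.2), ← sq_abs (u p.1 - u p.2)]
  exact pow_le_pow_left₀ (abs_nonneg _) (h p.1 p.2) 2

lemma K_integrable {u v : ℝ → ℝ} (hvm : Measurable v)
    (hu : Integrable (fun p : ℝ × ℝ => (u p.1 - u p.2) ^ 2 / |p.1 - p.2| ^ 2))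
    (h : ∀ a b, |v a - v b| ≤ |u a - u b|) :
    Integrable (fun p : ℝ × ℝ => (v p.1 - v p.2) ^ 2 / |p.1 - p.2| ^ 2) := by
  refine hu.mono' (K_meas hvm).aestronglyMeasurable (ae_of_all _ fun p => ?_)
  rw [Real.norm_eq_abs, abs_of_nonneg (K_nonneg v p)]
  exact K_mono h p

lemma gagliardoSq_nonneg (u : ℝ → ℝ) : 0 ≤ gagliardoSq u :=
  mul_nonneg (by positivity) (integral_nonneg (K_nonneg u))

lemma gagliardoSq_mono {u v : ℝ → ℝ} (hvm : Measurable v)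
    (hu : Integrable (fun p : ℝ × ℝ => (u p.1 - u p.2) ^ 2 / |p.1 - p.2| ^ 2))
    (h : ∀ a b, |v a - v b| ≤ |u a - u b|) : gagliardoSq v ≤ gagliardoSq u := by
  apply mul_le_mul_of_nonneg_left _ (by positivity)
  exact integral_mono (K_integrable hvm hu h) hu (K_mono h)

lemma core (ω : ℝ) (hω : 0 < ω)
    (hOz : ∀ α ∈ Set.Ioo (0:ℝ) ω, ∃ Hα : ℝ, 0 < Hα ∧
        ∀ u : ℝ → ℝ, memH12 u → gagliardoSq u ≤ 1 →
          (∫ x : ℝ, (Real.exp (α * (u x) ^ 2) - 1)) ≤ Hα * l2Sq u)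
    (v : ℝ → ℝ) (hvm : Measurable v) (hv : memH12 v) (α : ℝ) (hα : 0 < α)
    (hsmall : α * gagliardoSq v < ω) :
    Integrable (fun x : ℝ => Real.exp (α * (v x) ^ 2) - 1) := by
  obtain ⟨hv2, hvK⟩ := hv
  have hvsq : Integrable (fun x => (v x) ^ 2) := hv2.integrable_sq
  have hg0 : 0 ≤ gagliardoSq v := gagliardoSq_nonneg v
  -- choose scaling s
  obtain ⟨s, hs1, hs2, hs3⟩ : ∃ s : ℝ, α / ω < s ∧ s * gagliardoSq v ≤ 1 ∧ 0 < s := by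
    rcases eq_or_lt_of_le hg0 with h|h
    · exact ⟨α / ω + 1, by linarith, by rw [← h]; simp, by positivity⟩
    · refine ⟨(α / ω + 1 / gagliardoSq v) / 2, ?_, ?_, ?_⟩
      · have : α / ω < 1 / gagliardoSq v := by
          rw [div_lt_div_iff₀ hω h]; nlinarith
        linarith
      · nlinarith [one_div_mul_cancel (ne_of_gt h), (div_lt_one hω).2 hsmall,
          div_mul_eq_mul_div α ω (gagliardoSq v)]
      · positivity
  set β := α / s with hβdef
  have hβ : β ∈ Set.Ioo (0:ℝ) ω := by
    constructor
    · positivity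
    · rw [hβdef, div_lt_iff₀ hs3]
      have := (div_lt_iff₀ hω).mp hs1
      linarith
  obtain ⟨H, hHpos, hH⟩ := hOz β hβ
  have hβs : β * s = α := div_mul_cancel₀ α (ne_of_gt hs3)
  set C := H * (s * l2Sq v) with hC
  -- truncations
  set vM : ℕ → ℝ → ℝ := fun M x => trunc M (v x) with hvM
  have hvMm : ∀ M : ℕ, Measurable (vM M) := fun M =>
    (hvm.min measurable_const).max measurable_const
  have hMnn : ∀ M : ℕ, (0:ℝ) ≤ (M:ℝ) := fun M => Nat.cast_nonneg M
  have hfMnonneg : ∀ (M : ℕ) (x : ℝ), 0 ≤ Real.exp (α * (vM M x) ^ 2) - 1 :=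
    fun M x => by
      have : (1:ℝ) ≤ Real.exp (α * (vM M x) ^ 2) := Real.one_le_exp (by positivity)
      linarith
  have hfMmeas : ∀ M : ℕ, Measurable (fun x => Real.exp (α * (vM M x) ^ 2) - 1) :=
    fun M => ((Real.measurable_exp.comp
      ((measurable_const.mul ((hvMm M).pow_const 2)))).sub measurable_const)
  -- integrability of each truncation
  have hfMint : ∀ M : ℕ, Integrable (fun x => Real.exp (α * (vM M x) ^ 2) - 1) := by
    intro M
    refine (hvsq.const_mul (α * Real.exp (α * (M:ℝ) ^ 2))).mono'
      (hfMmeas M).aestronglyMeasurable (ae_of_all _ fun x => ?_)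
    rw [Real.norm_eq_abs, abs_of_nonneg (hfMnonneg M x)]
    have h1 : (vM M x) ^ 2 ≤ (M:ℝ) ^ 2 := by
      rw [← sq_abs (vM M x)]
      exact pow_le_pow_left₀ (abs_nonneg _) (trunc_abs_le' _ _ (hMnn M)) 2
    have h2 : (vM M x) ^ 2 ≤ (v x) ^ 2 := by
      rw [← sq_abs (vM M x), ← sq_abs (v x)]
      exact pow_le_pow_left₀ (abs_nonneg _) (trunc_abs_le _ _ (hMnn M)) 2
    have h3 := exp_sub_one_le (α * (vM M x) ^ 2)
    have h4 : Real.exp (α * (vM M x) ^ 2) ≤ Real.exp (α * (M:ℝ) ^ 2) :=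
      Real.exp_le_exp.2 (by nlinarith)
    have hy0 : 0 ≤ α * (vM M x) ^ 2 := by positivity
    have h5 : α * (vM M x) ^ 2 * Real.exp (α * (vM M x) ^ 2)
        ≤ α * (vM M x) ^ 2 * Real.exp (α * (M:ℝ) ^ 2) :=
      mul_le_mul_of_nonneg_left h4 hy0
    have h6 : α * (vM M x) ^ 2 * Real.exp (α * (M:ℝ) ^ 2)
        ≤ α * (v x) ^ 2 * Real.exp (α * (M:ℝ) ^ 2) :=
      mul_le_mul_of_nonneg_right (by nlinarith) (Real.exp_pos _).le
    calc Real.exp (α * (vM M x) ^ 2) - 1 ≤ _ := h3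
      _ ≤ _ := h5
      _ ≤ α * (v x) ^ 2 * Real.exp (α * (M:ℝ) ^ 2) := h6
      _ = α * Real.exp (α * (M:ℝ) ^ 2) * (v x) ^ 2 := by ring
  -- lipschitz comparison for truncations
  have hlip : ∀ (M : ℕ) (a b : ℝ), |vM M a - vM M b| ≤ |v a - v b| :=
    fun M a b => trunc_lip _ _ _
  -- uniform integral bound
  have hbound : ∀ M : ℕ, (∫ x, (Real.exp (α * (vM M x) ^ 2) - 1)) ≤ C := by
    intro M
    set w : ℝ → ℝ := fun x => Real.sqrt s * vM M x with hw
    have hwm : Measurable w := measurable_const.mul (hvMm M)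
    have hss : Real.sqrt s ^ 2 = s := Real.sq_sqrt hs3.le
    have hKw : ∀ p : ℝ × ℝ, (w p.1 - w p.2) ^ 2 / |p.1 - p.2| ^ 2
        = s * ((vM M p.1 - vM M p.2) ^ 2 / |p.1 - p.2| ^ 2) := by
      intro p
      rw [← mul_div_assoc]
      congr 1
      simp only [hw]
      nlinarith [hss]
    have hKvM : Integrable (fun p : ℝ × ℝ =>
        (vM M p.1 - vM M p.2) ^ 2 / |p.1 - p.2| ^ 2) :=
      K_integrable (hvMm M) hvK (hlip M)
    have hKwint : Integrable (fun p : ℝ × ℝ => (w p.1 - w p.2) ^ 2 / |p.1 - p.2| ^ 2) := by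
      have := hKvM.const_mul s
      exact this.congr (ae_of_all _ fun p => (hKw p).symm)
    have hwmem : memH12 w := by
      constructor
      · refine MemLp.of_le (hv2.const_mul (Real.sqrt s)) hwm.aestronglyMeasurable
          (ae_of_all _ fun x => ?_)
        simp only [Real.norm_eq_abs, hw, abs_mul]
        exact mul_le_mul_of_nonneg_left (trunc_abs_le _ _ (hMnn M))
          (abs_nonneg _)
      · exact hKwint
    have hgw : gagliardoSq w ≤ 1 := by
      have h1 : gagliardoSq w = s * gagliardoSq (vM M) := by
        unfold gagliardoSq
        rw [integral_congr_ae (ae_of_all _ hKw), integral_const_mul]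
        ring
      have h2 : gagliardoSq (vM M) ≤ gagliardoSq v :=
        gagliardoSq_mono (hvMm M) hvK (hlip M)
      calc gagliardoSq w = s * gagliardoSq (vM M) := h1
        _ ≤ s * gagliardoSq v := by
            exact mul_le_mul_of_nonneg_left h2 hs3.le
        _ ≤ 1 := hs2
    have key := hH w hwmem hgw
    have hLHS : (∫ x, (Real.exp (β * (w x) ^ 2) - 1))
        = ∫ x, (Real.exp (α * (vM M x) ^ 2) - 1) := by
      congr 1 with x
      congr 2
      rw [hw]
      rw [mul_pow, hss]
      rw [← mul_assoc, hβs]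
    have hRHS : H * l2Sq w ≤ C := by
      rw [hC]
      apply mul_le_mul_of_nonneg_left _ hHpos.le
      have h1 : l2Sq w = s * l2Sq (vM M) := by
        unfold l2Sq
        rw [← integral_const_mul]
        congr 1 with x
        simp only [hw]
        rw [mul_pow, hss]
      have h2 : l2Sq (vM M) ≤ l2Sq v := by
        apply integral_mono _ hvsq
        · intro x
          show (vM M x) ^ 2 ≤ (v x) ^ 2
          rw [← sq_abs (vM M x), ← sq_abs (v x)]
          exact pow_le_pow_left₀ (abs_nonneg _) (trunc_abs_le _ _ (hMnn M)) 2
        · refine hvsq.mono' ((hvMm M).pow_const 2).aestronglyMeasurable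
            (ae_of_all _ fun x => ?_)
          rw [Real.norm_eq_abs, abs_of_nonneg (sq_nonneg _), ← sq_abs (vM M x),
            ← sq_abs (v x)]
          exact pow_le_pow_left₀ (abs_nonneg _) (trunc_abs_le _ _ (hMnn M)) 2
      rw [h1]
      exact mul_le_mul_of_nonneg_left h2 hs3.le
    rw [hLHS] at key
    exact key.trans hRHS
  -- monotone convergence
  set f : ℝ → ℝ := fun x => Real.exp (α * (v x) ^ 2) - 1 with hf
  have hfnonneg : ∀ x, 0 ≤ f x := fun x => by
    have : (1:ℝ) ≤ Real.exp (α * (v x) ^ 2) := Real.one_le_exp (by positivity)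
    simp only [hf]; linarith
  have hfm : Measurable f :=
    (Real.measurable_exp.comp (measurable_const.mul (hvm.pow_const 2))).sub
      measurable_const
  set F : ℕ → ℝ → ENNReal := fun M x => ENNReal.ofReal (Real.exp (α * (vM M x) ^ 2) - 1)
    with hF
  have hFmeas : ∀ M, AEMeasurable (F M) volume := fun M =>
    (ENNReal.measurable_ofReal.comp (hfMmeas M)).aemeasurable
  have hFmono : ∀ᵐ x, Monotone fun M => F M x := by
    refine ae_of_all _ fun x M N hMN => ?_
    apply ENNReal.ofReal_le_ofReal
    have h := trunc_sq_mono (v x) (hMnn M) (Nat.cast_le.2 hMN)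
    have := Real.exp_le_exp.2 (mul_le_mul_of_nonneg_left h hα.le)
    simp only [hvM]
    linarith
  have hFtend : ∀ᵐ x, Filter.Tendsto (fun M => F M x) Filter.atTop
      (nhds (ENNReal.ofReal (f x))) := by
    refine ae_of_all _ fun x => ?_
    obtain ⟨N, hN⟩ := exists_nat_ge |v x|
    apply Filter.Tendsto.congr' _ tendsto_const_nhds
    filter_upwards [Filter.eventually_ge_atTop N] with M hM
    have : trunc M (v x) = v x := trunc_eq_self _ _ (hN.trans (Nat.cast_le.2 hM))
    simp only [hF, hf, hvM, this]
  have hmain := lintegral_tendsto_of_tendsto_of_monotone hFmeas hFmono hFtend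
  have hle : ∀ M, (∫⁻ x, F M x) ≤ ENNReal.ofReal C := by
    intro M
    have := ofReal_integral_eq_lintegral_ofReal (hfMint M) (ae_of_all _ (hfMnonneg M))
    rw [hF, ← this]
    exact ENNReal.ofReal_le_ofReal (hbound M)
  have hfin : (∫⁻ x, ENNReal.ofReal (f x)) ≤ ENNReal.ofReal C :=
    le_of_tendsto' hmain hle
  refine ⟨hfm.aestronglyMeasurable, ?_⟩
  rw [hasFiniteIntegral_iff_ofReal (ae_of_all _ hfnonneg)]
  exact lt_of_le_of_lt hfin ENNReal.ofReal_lt_top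

-- a.e. equality on the product
lemma ae_prod_of_ae {u g : ℝ → ℝ} (h : u =ᵐ[volume] g) :
    ∀ᵐ p : ℝ × ℝ, u p.1 = g p.1 ∧ u p.2 = g p.2 := by
  have hs : volume {x : ℝ | u x ≠ g x} = 0 := h
  have h1 : volume {p : ℝ × ℝ | u p.1 ≠ g p.1} = 0 := by
    have : {p : ℝ × ℝ | u p.1 ≠ g p.1} = {x : ℝ | u x ≠ g x} ×ˢ Set.univ := by
      ext p; simp [Set.mem_prod]
    rw [Measure.volume_eq_prod, this]
    rw [Measure.prod_prod, hs, zero_mul]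
  have h2 : volume {p : ℝ × ℝ | u p.2 ≠ g p.2} = 0 := by
    have : {p : ℝ × ℝ | u p.2 ≠ g p.2} = Set.univ ×ˢ {x : ℝ | u x ≠ g x} := by
      ext p; simp [Set.mem_prod]
    rw [Measure.volume_eq_prod, this]
    rw [Measure.prod_prod, hs, mul_zero]
  have e1 : ∀ᵐ p : ℝ × ℝ, u p.1 = g p.1 := by
    rw [ae_iff]; exact h1
  have e2 : ∀ᵐ p : ℝ × ℝ, u p.2 = g p.2 := by
    rw [ae_iff]; exact h2
  filter_upwards [e1, e2] with p hp1 hp2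
  exact ⟨hp1, hp2⟩

theorem stmt_6
    (hOzawa : ∃ ω : ℝ, 0 < ω ∧ ω ≤ Real.pi ∧
      ∀ α ∈ Set.Ioo (0:ℝ) ω, ∃ Hα : ℝ, 0 < Hα ∧
        ∀ u : ℝ → ℝ, memH12 u → gagliardoSq u ≤ 1 →
          (∫ x : ℝ, (Real.exp (α * (u x) ^ 2) - 1)) ≤ Hα * l2Sq u) :
    ∀ u : ℝ → ℝ, memH12 u → ∀ α : ℝ, 0 < α →
      Integrable (fun x : ℝ => Real.exp (α * (u x) ^ 2) - 1) := by
  obtain ⟨ω, hω, -, hOz⟩ := hOzawa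
  -- First, prove the statement for measurable u.
  suffices hmeas : ∀ v : ℝ → ℝ, Measurable v → memH12 v → ∀ α : ℝ, 0 < α →
      Integrable (fun x : ℝ => Real.exp (α * (v x) ^ 2) - 1) by
    intro u hu α hα
    obtain ⟨g, hgm, hug⟩ := hu.1.1
    have hKg : Integrable (fun p : ℝ × ℝ => (g p.1 - g p.2) ^ 2 / |p.1 - p.2| ^ 2) := by
      refine hu.2.congr ?_
      filter_upwards [ae_prod_of_ae hug] with p hp
      rw [hp.1, hp.2]
    have hg : memH12 g := ⟨hu.1.ae_eq hug, hKg⟩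
    have := hmeas g hgm.measurable hg α hα
    refine this.congr ?_
    filter_upwards [hug] with x hx
    rw [hx]
  intro v hvm hv α hα
  obtain ⟨hv2, hvK⟩ := hv
  have hvsq : Integrable (fun x => (v x) ^ 2) := hv2.integrable_sq
  -- residuals
  set r : ℕ → ℝ → ℝ := fun N x => v x - trunc N (v x) with hr
  have hrm : ∀ N : ℕ, Measurable (r N) := fun N =>
    hvm.sub ((hvm.min measurable_const).max measurable_const)
  have hrlip : ∀ (N : ℕ) (a b : ℝ), |r N a - r N b| ≤ |v a - v b| :=
    fun N a b => resid_lip _ _ _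
  have hrK : ∀ N : ℕ, Integrable (fun p : ℝ × ℝ =>
      (r N p.1 - r N p.2) ^ 2 / |p.1 - p.2| ^ 2) :=
    fun N => K_integrable (hrm N) hvK (hrlip N)
  have hrmem : ∀ N : ℕ, memH12 (r N) := by
    intro N
    constructor
    · refine MemLp.of_le hv2 (hrm N).aestronglyMeasurable (ae_of_all _ fun x => ?_)
      simp only [Real.norm_eq_abs, hr]
      exact resid_abs_le _ _ (Nat.cast_nonneg N)
    · exact hrK N
  -- gagliardoSq (r N) → 0
  have htend : Filter.Tendsto (fun N : ℕ => gagliardoSq (r N)) Filter.atTop (nhds 0) := by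
    have h0 : Filter.Tendsto (fun N : ℕ =>
        ∫ p : ℝ × ℝ, (r N p.1 - r N p.2) ^ 2 / |p.1 - p.2| ^ 2) Filter.atTop
        (nhds (∫ _ : ℝ × ℝ, (0:ℝ))) := by
      apply tendsto_integral_of_dominated_convergence
        (fun p : ℝ × ℝ => (v p.1 - v p.2) ^ 2 / |p.1 - p.2| ^ 2)
        (fun N => (K_meas (hrm N)).aestronglyMeasurable) hvK
      · intro N
        refine ae_of_all _ fun p => ?_
        rw [Real.norm_eq_abs, abs_of_nonneg (K_nonneg _ p)]
        exact K_mono (hrlip N) p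
      · refine ae_of_all _ fun p => ?_
        obtain ⟨N₀, hN₀⟩ := exists_nat_ge (max |v p.1| |v p.2|)
        apply Filter.Tendsto.congr' _ tendsto_const_nhds
        filter_upwards [Filter.eventually_ge_atTop N₀] with N hN
        have hc : (max |v p.1| |v p.2|) ≤ (N:ℝ) := hN₀.trans (Nat.cast_le.2 hN)
        have e1 : trunc N (v p.1) = v p.1 :=
          trunc_eq_self _ _ ((le_max_left _ _).trans hc)
        have e2 : trunc N (v p.2) = v p.2 :=
          trunc_eq_self _ _ ((le_max_right _ _).trans hc)
        simp only [hr, e1, e2, sub_self]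
        norm_num
    rw [integral_zero] at h0
    have := h0.const_mul (1 / (2 * Real.pi))
    rw [mul_zero] at this
    exact this
  -- pick N with 2α * gagliardo (r N) < ω
  have h2α : (0:ℝ) < 2 * α := by linarith
  obtain ⟨N, hN⟩ : ∃ N : ℕ, 2 * α * gagliardoSq (r N) < ω := by
    have := htend.const_mul (2 * α)
    rw [mul_zero] at this
    exact (this.eventually_lt_const hω).exists
  -- integrability of exp(2α r²) − 1
  have h1 : Integrable (fun x => Real.exp ((2 * α) * (r N x) ^ 2) - 1) :=
    core ω hω hOz (r N) (hrm N) (hrmem N) (2 * α) h2α hN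
  -- splitting bound
  set E : ℝ := Real.exp (2 * α * (N:ℝ) ^ 2) with hE
  have hE1 : (1:ℝ) ≤ E := Real.one_le_exp (by positivity)
  have hbd : ∀ x : ℝ, Real.exp (α * (v x) ^ 2) - 1
      ≤ E * (Real.exp ((2 * α) * (r N x) ^ 2) - 1) + (2 * α * E) * (v x) ^ 2 := by
    intro x
    set a := r N x with ha
    set b := trunc (N:ℝ) (v x) with hb
    have hvx : v x = b + a := by simp [ha, hb, hr]
    have hbN : |b| ≤ (N:ℝ) := trunc_abs_le' _ _ (Nat.cast_nonneg N)
    have hbv : |b| ≤ |v x| := trunc_abs_le _ _ (Nat.cast_nonneg N)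
    have hsq : α * (v x) ^ 2 ≤ 2 * α * a ^ 2 + 2 * α * b ^ 2 := by
      rw [hvx]; nlinarith [sq_nonneg (a - b)]
    have hexp1 : Real.exp (α * (v x) ^ 2)
        ≤ Real.exp (2 * α * a ^ 2) * Real.exp (2 * α * b ^ 2) := by
      rw [← Real.exp_add]
      exact Real.exp_le_exp.2 hsq
    have hexp2 : Real.exp (2 * α * b ^ 2) ≤ E := by
      apply Real.exp_le_exp.2
      have : b ^ 2 ≤ (N:ℝ) ^ 2 := by
        rw [← sq_abs b]; nlinarith [abs_nonneg b, (Nat.cast_nonneg N : (0:ℝ) ≤ (N:ℝ))]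
      nlinarith
    have hexp3 : Real.exp (2 * α * b ^ 2) - 1 ≤ 2 * α * b ^ 2 * E := by
      have h' := exp_sub_one_le (2 * α * b ^ 2)
      have h'' := mul_le_mul_of_nonneg_left hexp2 (by positivity : (0:ℝ) ≤ 2 * α * b ^ 2)
      linarith
    have hb2v : b ^ 2 ≤ (v x) ^ 2 := by
      rw [← sq_abs b, ← sq_abs (v x)]; nlinarith [abs_nonneg b]
    have hA1 : (1:ℝ) ≤ Real.exp (2 * α * a ^ 2) := Real.one_le_exp (by positivity)
    -- e^{A+B} − 1 = (e^A − 1) e^B + (e^B − 1) ≤ E(e^A−1) + 2αE v²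
    calc Real.exp (α * (v x) ^ 2) - 1
        ≤ Real.exp (2 * α * a ^ 2) * Real.exp (2 * α * b ^ 2) - 1 := by linarith
      _ = (Real.exp (2 * α * a ^ 2) - 1) * Real.exp (2 * α * b ^ 2)
          + (Real.exp (2 * α * b ^ 2) - 1) := by ring
      _ ≤ (Real.exp (2 * α * a ^ 2) - 1) * E + 2 * α * b ^ 2 * E := by
          have hA0 : 0 ≤ Real.exp (2 * α * a ^ 2) - 1 := by linarith
          nlinarith [mul_le_mul_of_nonneg_left hexp2 hA0]
      _ ≤ E * (Real.exp ((2 * α) * a ^ 2) - 1) + (2 * α * E) * (v x) ^ 2 := by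
          nlinarith [mul_le_mul_of_nonneg_right hb2v (le_trans zero_le_one hE1 : (0:ℝ) ≤ E)]
  -- conclude by domination
  have hbint : Integrable (fun x =>
      E * (Real.exp ((2 * α) * (r N x) ^ 2) - 1) + (2 * α * E) * (v x) ^ 2) :=
    (h1.const_mul E).add (hvsq.const_mul (2 * α * E))
  refine hbint.mono' ?_ (ae_of_all _ fun x => ?_)
  · exact ((Real.measurable_exp.comp (measurable_const.mul (hvm.pow_const 2))).sub
      measurable_const).aestronglyMeasurable
  · have hnn : (0:ℝ) ≤ Real.exp (α * (v x) ^ 2) - 1 := by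
      have : (1:ℝ) ≤ Real.exp (α * (v x) ^ 2) := Real.one_le_exp (by positivity)
      linarith
    rw [Real.norm_eq_abs, abs_of_nonneg hnn]
    exact hbd x
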